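/- (Weak duality, part (i).) Let G = (V,E) be a finite, connected, undirected graph with no self-loops, V = {1,…,N}, all edge weights equal to 1, let ρ^a, ρ^b ∈ P(G), Σ ∈ ℝ^N, and let w : [0,1] → ℝ be continuous piecewise linear. Suppose (ρ, m) ∈ C_F(ρ^a, ρ^b) and S : [0,1] → ℝ^N is absolutely continuous with square-integrable derivative such that for a.e. t ∈ [0,1]: ∑_i Ṡ_i(t) ρ_i(t) + (1/4) ∑_{(i,j)∈E} (S_i(t) − S_j(t))² θ_ij(ρ(t)) + (1/2) ∑_{(i,j)∈E} (Σ_i − Σ_j)(S_i(t) − S_j(t)) θ_ij(ρ(t)) ẇ(t) ≤ 0. Then ⟨S(1), ρ^b⟩ − ⟨S(0), ρ^a⟩ ≤ A(ρ, m). -/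

import Mathlib

open scoped BigOperators ENNReal
open MeasureTheory

noncomputable section

/-- Density-dependent edge weight `θ_ij(ρ) = (ρ_i + ρ_j)/2`. -/
def thetaA {N : ℕ} (ρ : Fin N → ℝ) (i j : Fin N) : ℝ := (ρ i + ρ j) / 2

/-- The cost function `L : ℝ × ℝ → [0,∞]`, `L(x,y) = y²/x` for `x > 0`,
`L(0,0) = 0`, and `L(x,y) = ∞` otherwise. -/
def Lcost (x y : ℝ) : ℝ≥0∞ :=
  if 0 < x then ENNReal.ofReal (y ^ 2 / x)
  else if x = 0 ∧ y = 0 then 0 else ⊤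

/-- Membership in the probability simplex `P(G)`. -/
def ProbVec {N : ℕ} (ρ : Fin N → ℝ) : Prop := (∀ i, 0 ≤ ρ i) ∧ ∑ i, ρ i = 1

/-- A vector field on the graph: a skew-symmetric matrix supported on edges. -/
def VecField {N : ℕ} (E : Fin N → Fin N → Prop) (m : Fin N → Fin N → ℝ) : Prop :=
  (∀ i j, m i j = - m j i) ∧ (∀ i j, ¬ E i j → m i j = 0)

/-- `w` is continuous and piecewise linear on `[0,1]` with a.e. derivative `wd`:
there is a partition `0 = t₀ < t₁ < ⋯ = 1` on whose pieces `w` is affine with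
slope `c k`, and `wd` equals `c k` on `[t_k, t_{k+1})`. -/
def IsPWL (w wd : ℝ → ℝ) : Prop :=
  ∃ (K : ℕ) (t : Fin (K + 2) → ℝ) (c : Fin (K + 1) → ℝ),
    StrictMono t ∧ t 0 = 0 ∧ t (Fin.last (K + 1)) = 1 ∧
    (∀ k : Fin (K + 1), ∀ s ∈ Set.Icc (t k.castSucc) (t k.succ),
      w s = w (t k.castSucc) + c k * (s - t k.castSucc)) ∧
    (∀ k : Fin (K + 1), ∀ s ∈ Set.Ico (t k.castSucc) (t k.succ), wd s = c k)

/-- The action `A(ρ,m) = ∫₀¹ (1/4) ∑_{(i,j)∈E} L(θ_ij(ρ(t)), m_ij(t)) dt`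
(sum over ordered pairs), valued in `[0,∞]`. -/
def action {N : ℕ} (E : Fin N → Fin N → Prop) [DecidableRel E]
    (ρ : ℝ → Fin N → ℝ) (m : ℝ → Fin N → Fin N → ℝ) : ℝ≥0∞ :=
  ∫⁻ t in Set.Icc (0 : ℝ) 1,
    (1 / 4) * ∑ i, ∑ j, (if E i j then Lcost (thetaA (ρ t) i j) (m t i j) else 0)

/-- The feasible set `C_F(ρ^a,ρ^b)` of the Wong–Zakai perturbed optimal control
problem: `ρ` is an absolutely continuous curve in `P(G)` joining `ρ^a` to `ρ^b`,
`m` is an `L²` field of skew-symmetric matrices supported on edges, and for a.e. `t`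
and all `i`: `ρ̇_i + ∑_{j∈N(i)} m_ij + ∑_{j∈N(i)} (Σ_j − Σ_i) θ_ij(ρ) ẇ = 0`
(stated in integrated form). -/
def Feasible {N : ℕ} (E : Fin N → Fin N → Prop) [DecidableRel E]
    (Sg : Fin N → ℝ) (wd : ℝ → ℝ) (ρa ρb : Fin N → ℝ)
    (ρ : ℝ → Fin N → ℝ) (m : ℝ → Fin N → Fin N → ℝ) : Prop :=
  ContinuousOn ρ (Set.Icc 0 1) ∧
  (∀ t ∈ Set.Icc (0 : ℝ) 1, ProbVec (ρ t)) ∧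
  ρ 0 = ρa ∧ ρ 1 = ρb ∧
  (∀ t, VecField E (m t)) ∧
  (∀ i j, MemLp (fun t => m t i j) 2 (volume.restrict (Set.Icc (0 : ℝ) 1))) ∧
  (∀ i, IntervalIntegrable
    (fun s => ∑ j, (if E i j then m s i j + (Sg j - Sg i) * thetaA (ρ s) i j * wd s else 0))
    volume 0 1) ∧
  (∀ i, ∀ t ∈ Set.Icc (0 : ℝ) 1,
    ρ t i = ρa i - ∫ s in (0 : ℝ)..t,
      ∑ j, (if E i j then m s i j + (Sg j - Sg i) * thetaA (ρ s) i j * wd s else 0))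

/-- `S : [0,1] → ℝ^N` is absolutely continuous with square-integrable derivative
`Sd` (stated in integrated form). -/
def AbsCtsL2 {N : ℕ} (S Sd : ℝ → Fin N → ℝ) : Prop :=
  (∀ i, MemLp (fun t => Sd t i) 2 (volume.restrict (Set.Icc (0 : ℝ) 1))) ∧
  (∀ i, IntervalIntegrable (fun t => Sd t i) volume 0 1) ∧
  (∀ i, ∀ t ∈ Set.Icc (0 : ℝ) 1, S t i = S 0 i + ∫ s in (0 : ℝ)..t, Sd s i)

/-- The Hamilton–Jacobi expression
`∑_i Ṡ_i μ_i + (1/4) ∑_{(i,j)∈E} (S_i − S_j)² θ_ij(μ)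
  + (1/2) ∑_{(i,j)∈E} (Σ_i − Σ_j)(S_i − S_j) θ_ij(μ) ẇ(t)`. -/
def hjbExpr {N : ℕ} (E : Fin N → Fin N → Prop) [DecidableRel E]
    (Sg : Fin N → ℝ) (wd : ℝ → ℝ) (S Sd : ℝ → Fin N → ℝ)
    (μ : Fin N → ℝ) (t : ℝ) : ℝ :=
  (∑ i, Sd t i * μ i)
    + (1 / 4) * ∑ i, ∑ j, (if E i j then (S t i - S t j) ^ 2 * thetaA μ i j else 0)
    + (1 / 2) *
        (∑ i, ∑ j, (if E i j then (Sg i - Sg j) * (S t i - S t j) * thetaA μ i j else 0))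
        * wd t


/- ### Auxiliary lemmas -/

lemma myOfReal_sum_le {ι : Type*} (s : Finset ι) (f : ι → ℝ) :
    ENNReal.ofReal (∑ i ∈ s, f i) ≤ ∑ i ∈ s, ENNReal.ofReal (f i) := by
  classical
  induction s using Finset.induction with
  | empty => simp
  | insert _ _ h ih =>
    rw [Finset.sum_insert h, Finset.sum_insert h]
    exact le_trans ENNReal.ofReal_add_le (add_le_add le_rfl ih)

lemma pair_bound (θ a mv : ℝ) (hθ : 0 ≤ θ) :
    ENNReal.ofReal (-(1/4 * (a ^ 2 * θ)) - 1/2 * (a * mv)) ≤ 1/4 * Lcost θ mv := by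
  rcases lt_or_eq_of_le hθ with hpos | hzero
  · have h1 : (-(1/4 * (a ^ 2 * θ)) - 1/2 * (a * mv)) ≤ 1/4 * (mv ^ 2 / θ) := by
      rw [mul_div_assoc' (1/4) (mv^2) θ, le_div_iff₀ hpos]
      nlinarith [sq_nonneg (mv + a * θ)]
    calc ENNReal.ofReal (-(1/4 * (a ^ 2 * θ)) - 1/2 * (a * mv))
        ≤ ENNReal.ofReal (1/4 * (mv ^ 2 / θ)) := ENNReal.ofReal_le_ofReal h1
      _ = ENNReal.ofReal (1/4) * ENNReal.ofReal (mv ^ 2 / θ) := by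
          rw [ENNReal.ofReal_mul (by norm_num)]
      _ = 1/4 * Lcost θ mv := by
          rw [Lcost, if_pos hpos]
          congr 1
          rw [ENNReal.ofReal_div_of_pos (by norm_num)]
          norm_num
  · rcases eq_or_ne mv 0 with hm | hm
    · simp [Lcost, ← hzero, hm]
    · have : Lcost θ mv = ⊤ := by
        rw [Lcost, if_neg (by rw [← hzero]; exact lt_irrefl 0),
          if_neg (by rintro ⟨-, h⟩; exact hm h)]
      rw [this, ENNReal.mul_top (by norm_num)]
      exact le_top


lemma skew_sum {N : ℕ} (E : Fin N → Fin N → Prop) [DecidableRel E]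
    (hE : ∀ i j, E i j ↔ E j i) (s : Fin N → ℝ) (X : Fin N → Fin N → ℝ)
    (hX : ∀ i j, E i j → X i j = - X j i) :
    ∑ i, s i * ∑ j, (if E i j then X i j else 0)
      = (1/2) * ∑ i, ∑ j, (if E i j then (s i - s j) * X i j else 0) := by
  have h1 : ∑ i, s i * ∑ j, (if E i j then X i j else 0)
      = ∑ i, ∑ j, (if E i j then s i * X i j else 0) := by
    refine Finset.sum_congr rfl fun i _ => ?_
    rw [Finset.mul_sum]
    exact Finset.sum_congr rfl fun j _ => by split_ifs <;> simp
  have h2 : ∑ i, ∑ j, (if E i j then s j * X i j else 0)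
      = ∑ i, ∑ j, (if E i j then -(s i * X i j) else 0) := by
    rw [Finset.sum_comm]
    refine Finset.sum_congr rfl fun j _ => Finset.sum_congr rfl fun i _ => ?_
    by_cases h : E i j
    · rw [if_pos h, if_pos ((hE i j).mp h), hX j i ((hE i j).mp h)]
      ring
    · rw [if_neg h, if_neg (fun hji => h ((hE j i).mp hji))]
  have h3 : ∑ i, ∑ j, (if E i j then (s i - s j) * X i j else 0)
      = ∑ i, ∑ j, ((if E i j then s i * X i j else 0) - (if E i j then s j * X i j else 0)) := by
    refine Finset.sum_congr rfl fun i _ => Finset.sum_congr rfl fun j _ => ?_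
    split_ifs <;> ring
  have h4 : ∑ i, ∑ j, (if E i j then -(s i * X i j) else 0)
      = - ∑ i, ∑ j, (if E i j then s i * X i j else 0) := by
    rw [← Finset.sum_neg_distrib]
    refine Finset.sum_congr rfl fun i _ => ?_
    rw [← Finset.sum_neg_distrib]
    exact Finset.sum_congr rfl fun j _ => by split_ifs <;> simp
  rw [h1, h3]
  simp only [Finset.sum_sub_distrib, h2, h4]
  ring


/-- integrability of `t ↦ g t * ∫_{(0,t]} h` on `(0,1]`. -/
lemma prim_integrable {g h : ℝ → ℝ} (hg : IntegrableOn g (Set.Ioc 0 1) volume)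
    (hh : IntegrableOn h (Set.Ioc 0 1) volume) :
    IntegrableOn (fun t => g t * ∫ s in Set.Ioc (0:ℝ) t, h s) (Set.Ioc 0 1) volume := by
  have hhIcc : IntegrableOn h (Set.Icc 0 1) volume := by
    rw [integrableOn_Icc_iff_integrableOn_Ioc]; exact hh
  have hcont : ContinuousOn (fun t => ∫ s in Set.Ioc (0:ℝ) t, h s) (Set.Icc 0 1) :=
    intervalIntegral.continuousOn_primitive hhIcc
  have haesm : AEStronglyMeasurable (fun t => ∫ s in Set.Ioc (0:ℝ) t, h s)
      (volume.restrict (Set.Ioc 0 1)) := by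
    refine AEStronglyMeasurable.mono_measure (μ := volume.restrict (Set.Icc 0 1))
      (hcont.aestronglyMeasurable measurableSet_Icc) ?_
    exact Measure.restrict_mono Set.Ioc_subset_Icc_self le_rfl
  set C : ℝ := ∫ s in Set.Ioc (0:ℝ) 1, |h s| with hC
  refine Integrable.mono' (g := fun t => |g t| * C) (hg.norm.mul_const C)
    (hg.aestronglyMeasurable.mul haesm) ?_
  filter_upwards [ae_restrict_mem measurableSet_Ioc] with t ht
  rw [norm_mul, Real.norm_eq_abs, Real.norm_eq_abs]
  refine mul_le_mul_of_nonneg_left ?_ (abs_nonneg _)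
  calc |∫ s in Set.Ioc (0:ℝ) t, h s| ≤ ∫ s in Set.Ioc (0:ℝ) t, |h s| := by
        have := MeasureTheory.norm_integral_le_integral_norm (μ := volume.restrict (Set.Ioc 0 t)) h
        simpa [Real.norm_eq_abs] using this
    _ ≤ C := by
        refine setIntegral_mono_set hh.abs ?_ ?_
        · filter_upwards with s using abs_nonneg _
        · filter_upwards with s hs using ⟨hs.1, hs.2.trans ht.2⟩


lemma fubini_core {g h : ℝ → ℝ} (hg : IntegrableOn g (Set.Ioc 0 1) volume)
    (hh : IntegrableOn h (Set.Ioc 0 1) volume) :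
    (∫ t in Set.Ioc (0:ℝ) 1, g t * ∫ s in Set.Ioc (0:ℝ) t, h s)
      + (∫ t in Set.Ioc (0:ℝ) 1, h t * ∫ s in Set.Ioc (0:ℝ) t, g s)
    = (∫ t in Set.Ioc (0:ℝ) 1, g t) * (∫ t in Set.Ioc (0:ℝ) 1, h t) := by
  have hμae : ∀ᵐ t ∂(volume.restrict (Set.Ioc (0:ℝ) 1)), t ∈ Set.Ioc (0:ℝ) 1 :=
    ae_restrict_mem measurableSet_Ioc
  have hscut : ∀ t ∈ Set.Ioc (0:ℝ) 1, ∀ f : ℝ → ℝ,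
      (∫ s in Set.Ioc (0:ℝ) t, f s)
        = ∫ s in Set.Iic t, f s ∂(volume.restrict (Set.Ioc (0:ℝ) 1)) := by
    intro t ht f
    rw [Measure.restrict_restrict measurableSet_Iic]
    have hset : Set.Iic t ∩ Set.Ioc 0 1 = Set.Ioc (0:ℝ) t := by
      ext s
      simp only [Set.mem_Ioc, Set.mem_inter_iff, Set.mem_Iic]
      constructor
      · rintro ⟨h1, h2, _⟩; exact ⟨h2, h1⟩
      · rintro ⟨h1, h2⟩; exact ⟨h2, h1, h2.trans ht.2⟩
    rw [hset]
  have hsplit : ∀ t ∈ Set.Ioc (0:ℝ) 1,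
      (∫ s in Set.Ioc (0:ℝ) t, h s) + ∫ s in Set.Ioc t 1, h s
        = ∫ s in Set.Ioc (0:ℝ) 1, h s := by
    intro t ht
    rw [← setIntegral_union (Set.Ioc_disjoint_Ioc_of_le le_rfl) measurableSet_Ioc
        (hh.mono_set (Set.Ioc_subset_Ioc_right ht.2))
        (hh.mono_set (Set.Ioc_subset_Ioc_left ht.1.le)),
      Set.Ioc_union_Ioc_eq_Ioc ht.1.le ht.2]
  set F2 : ℝ × ℝ → ℝ := fun p =>
    Set.indicator {q : ℝ × ℝ | q.2 ≤ q.1} (fun q => h q.1 * g q.2) p with hF2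
  have hF2eval : ∀ t s : ℝ, F2 (t, s) = (Set.indicator (Set.Ici s) h t) * g s := by
    intro t s
    rw [hF2]
    simp only [Set.indicator_apply, Set.mem_setOf_eq, Set.mem_Ici]
    by_cases hst : s ≤ t
    · simp [hst]
    · simp [hst]
  have hF2eval' : ∀ t s : ℝ, F2 (t, s) = h t * (Set.indicator (Set.Iic t) g s) := by
    intro t s
    rw [hF2]
    simp only [Set.indicator_apply, Set.mem_setOf_eq, Set.mem_Iic]
    by_cases hst : s ≤ t
    · simp [hst]
    · simp [hst]
  have hF2int : Integrable F2
      ((volume.restrict (Set.Ioc (0:ℝ) 1)).prod (volume.restrict (Set.Ioc (0:ℝ) 1))) :=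
    (hh.mul_prod hg).indicator (measurableSet_le measurable_snd measurable_fst)
  have hterm2 : (∫ t in Set.Ioc (0:ℝ) 1, h t * ∫ s in Set.Ioc (0:ℝ) t, g s)
      = ∫ t in Set.Ioc (0:ℝ) 1,
          (∫ s in Set.Ioc (0:ℝ) 1, F2 (t, s)) := by
    refine integral_congr_ae ?_
    filter_upwards [hμae] with t ht
    rw [hscut t ht g, ← integral_indicator measurableSet_Iic, ← integral_const_mul]
    exact integral_congr_ae (Filter.Eventually.of_forall fun s => (hF2eval' t s).symm)
  have hswap : (∫ t in Set.Ioc (0:ℝ) 1, (∫ s in Set.Ioc (0:ℝ) 1, F2 (t, s)))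
      = ∫ s in Set.Ioc (0:ℝ) 1, (∫ t in Set.Ioc (0:ℝ) 1, F2 (t, s)) :=
    integral_integral_swap hF2int
  have hterm2' : (∫ s in Set.Ioc (0:ℝ) 1, (∫ t in Set.Ioc (0:ℝ) 1, F2 (t, s)))
      = ∫ s in Set.Ioc (0:ℝ) 1, g s * ∫ u in Set.Ioc s 1, h u := by
    refine integral_congr_ae ?_
    filter_upwards [hμae] with s hs
    simp only [hF2eval]
    rw [integral_mul_const, integral_indicator measurableSet_Ici,
      Measure.restrict_restrict measurableSet_Ici]
    have h2 : Set.Ici s ∩ Set.Ioc 0 1 = Set.Icc s 1 := by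
      ext u
      simp only [Set.mem_inter_iff, Set.mem_Ici, Set.mem_Ioc, Set.mem_Icc]
      constructor
      · rintro ⟨h1', _, h3'⟩; exact ⟨h1', h3'⟩
      · rintro ⟨h1', h2'⟩; exact ⟨h1', lt_of_lt_of_le hs.1 h1', h2'⟩
    rw [h2, setIntegral_congr_set Ioc_ae_eq_Icc.symm, mul_comm]
  have I1 : Integrable (fun t => g t * ∫ s in Set.Ioc (0:ℝ) t, h s)
      (volume.restrict (Set.Ioc (0:ℝ) 1)) := prim_integrable hg hh
  have I2 : Integrable (fun t => g t * ∫ s in Set.Ioc t 1, h s)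
      (volume.restrict (Set.Ioc (0:ℝ) 1)) := by
    refine (((hg.mul_const (∫ s in Set.Ioc (0:ℝ) 1, h s)).sub I1).congr ?_)
    filter_upwards [hμae] with t ht
    simp only [Pi.sub_apply]
    rw [← hsplit t ht]; ring
  rw [hterm2, hswap, hterm2', ← integral_add I1 I2]
  have : (∫ t in Set.Ioc (0:ℝ) 1,
      ((g t * ∫ s in Set.Ioc (0:ℝ) t, h s) + g t * ∫ s in Set.Ioc t 1, h s))
      = ∫ t in Set.Ioc (0:ℝ) 1, g t * ∫ s in Set.Ioc (0:ℝ) 1, h s := by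
    refine integral_congr_ae ?_
    filter_upwards [hμae] with t ht
    rw [← hsplit t ht]; ring
  rw [this, integral_mul_const]


lemma parts {g h : ℝ → ℝ} (hg : IntegrableOn g (Set.Ioc 0 1) volume)
    (hh : IntegrableOn h (Set.Ioc 0 1) volume) (a b : ℝ) :
    (∫ t in Set.Ioc (0:ℝ) 1,
        (h t * (b - ∫ s in Set.Ioc (0:ℝ) t, g s)
          - (a + ∫ s in Set.Ioc (0:ℝ) t, h s) * g t))
    = (a + ∫ s in Set.Ioc (0:ℝ) 1, h s) * (b - ∫ s in Set.Ioc (0:ℝ) 1, g s) - a * b := by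
  have I1 : Integrable (fun t => h t * ∫ s in Set.Ioc (0:ℝ) t, g s)
      (volume.restrict (Set.Ioc (0:ℝ) 1)) := prim_integrable hh hg
  have I2 : Integrable (fun t => g t * ∫ s in Set.Ioc (0:ℝ) t, h s)
      (volume.restrict (Set.Ioc (0:ℝ) 1)) := prim_integrable hg hh
  have key := fubini_core hh hg
  have expand : (∫ t in Set.Ioc (0:ℝ) 1,
        (h t * (b - ∫ s in Set.Ioc (0:ℝ) t, g s)
          - (a + ∫ s in Set.Ioc (0:ℝ) t, h s) * g t))
      = (∫ t in Set.Ioc (0:ℝ) 1, h t * b)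
        - (∫ t in Set.Ioc (0:ℝ) 1, a * g t)
        - ((∫ t in Set.Ioc (0:ℝ) 1, h t * ∫ s in Set.Ioc (0:ℝ) t, g s)
          + (∫ t in Set.Ioc (0:ℝ) 1, g t * ∫ s in Set.Ioc (0:ℝ) t, h s)) := by
    have step : (∫ t in Set.Ioc (0:ℝ) 1,
        (h t * (b - ∫ s in Set.Ioc (0:ℝ) t, g s)
          - (a + ∫ s in Set.Ioc (0:ℝ) t, h s) * g t))
        = ∫ t in Set.Ioc (0:ℝ) 1,
            ((h t * b - a * g t)
              - ((h t * ∫ s in Set.Ioc (0:ℝ) t, g s)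
                + g t * ∫ s in Set.Ioc (0:ℝ) t, h s)) := by
      refine integral_congr_ae (Filter.Eventually.of_forall fun t => ?_)
      ring
    have J3 : Integrable (fun t => h t * b) (volume.restrict (Set.Ioc (0:ℝ) 1)) :=
      hh.mul_const b
    have J4 : Integrable (fun t => a * g t) (volume.restrict (Set.Ioc (0:ℝ) 1)) :=
      hg.const_mul a
    have J1 : Integrable (fun t => h t * b - a * g t)
        (volume.restrict (Set.Ioc (0:ℝ) 1)) := J3.sub J4
    have J2 : Integrable (fun t =>
        (h t * ∫ s in Set.Ioc (0:ℝ) t, g s) + g t * ∫ s in Set.Ioc (0:ℝ) t, h s)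
        (volume.restrict (Set.Ioc (0:ℝ) 1)) := I1.add I2
    rw [step, integral_sub J1 J2, integral_sub J3 J4, integral_add I1 I2]
  rw [expand, integral_mul_const, integral_const_mul, key]
  ring


/-- Weak duality, part (i): if `(ρ,m)` is feasible and `S` is an absolutely
continuous subsolution of the Hamilton–Jacobi inequality along `ρ`, then
`⟨S(1),ρ^b⟩ − ⟨S(0),ρ^a⟩ ≤ A(ρ,m)`. -/
theorem weak_duality_i
    (N : ℕ) (hN : 2 ≤ N) (E : Fin N → Fin N → Prop) [DecidableRel E]
    (hEsymm : ∀ i j, E i j ↔ E j i) (hEirr : ∀ i, ¬ E i i)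
    (hconn : ∀ i j : Fin N, Relation.ReflTransGen (fun a b => E a b) i j)
    (Sg : Fin N → ℝ) (w wd : ℝ → ℝ) (hw : IsPWL w wd)
    (ρa ρb : Fin N → ℝ) (hρa : ProbVec ρa) (hρb : ProbVec ρb)
    (ρ : ℝ → Fin N → ℝ) (m : ℝ → Fin N → Fin N → ℝ)
    (hfeas : Feasible E Sg wd ρa ρb ρ m)
    (S Sd : ℝ → Fin N → ℝ) (hS : AbsCtsL2 S Sd)
    (hhjb : ∀ᵐ t ∂(volume.restrict (Set.Icc (0 : ℝ) 1)),
      hjbExpr E Sg wd S Sd (ρ t) t ≤ 0) :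
    ENNReal.ofReal ((∑ i, S 1 i * ρb i) - ∑ i, S 0 i * ρa i) ≤ action E ρ m := by
  classical
  obtain ⟨hcont, hprob, hρ0, hρ1, hvf, _, hflux, hρrep⟩ := hfeas
  obtain ⟨_, hSdInt, hSrep⟩ := hS
  set g : Fin N → ℝ → ℝ := fun i s =>
    ∑ j, (if E i j then m s i j + (Sg j - Sg i) * thetaA (ρ s) i j * wd s else 0) with hgdef
  have hgInt : ∀ i, IntegrableOn (g i) (Set.Ioc 0 1) volume := fun i => (hflux i).1
  have hhInt : ∀ i, IntegrableOn (fun t => Sd t i) (Set.Ioc 0 1) volume :=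
    fun i => (hSdInt i).1
  have hρrep' : ∀ i, ∀ t ∈ Set.Icc (0:ℝ) 1,
      ρ t i = ρa i - ∫ s in Set.Ioc (0:ℝ) t, g i s := by
    intro i t ht
    rw [hρrep i t ht, intervalIntegral.integral_of_le ht.1]
  have hSrep' : ∀ i, ∀ t ∈ Set.Icc (0:ℝ) 1,
      S t i = S 0 i + ∫ s in Set.Ioc (0:ℝ) t, Sd s i := by
    intro i t ht
    rw [hSrep i t ht, intervalIntegral.integral_of_le ht.1]
  set D : ℝ → ℝ := fun t => ∑ i, (Sd t i * ρ t i - S t i * g i t) with hDdef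
  have hμae : ∀ᵐ t ∂(volume.restrict (Set.Ioc (0:ℝ) 1)), t ∈ Set.Ioc (0:ℝ) 1 :=
    ae_restrict_mem measurableSet_Ioc
  -- integrability of the summands of D
  have hf1 : ∀ i, Integrable (fun t => Sd t i * ρ t i)
      (volume.restrict (Set.Ioc (0:ℝ) 1)) := by
    intro i
    have hρcont : ContinuousOn (fun t => ρ t i) (Set.Icc 0 1) :=
      (continuous_apply i).comp_continuousOn hcont
    have hρaesm : AEStronglyMeasurable (fun t => ρ t i)
        (volume.restrict (Set.Ioc (0:ℝ) 1)) :=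
      AEStronglyMeasurable.mono_measure (μ := volume.restrict (Set.Icc 0 1))
        (hρcont.aestronglyMeasurable measurableSet_Icc)
        (Measure.restrict_mono Set.Ioc_subset_Icc_self le_rfl)
    refine Integrable.mono' (g := fun t => |Sd t i|) (hhInt i).norm
      ((hhInt i).aestronglyMeasurable.mul hρaesm) ?_
    filter_upwards [hμae] with t ht
    obtain ⟨hnn, hsum⟩ := hprob t ⟨ht.1.le, ht.2⟩
    have h1 : ρ t i ≤ 1 := by
      rw [← hsum]
      exact Finset.single_le_sum (fun j _ => hnn j) (Finset.mem_univ i)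
    rw [norm_mul, Real.norm_eq_abs, Real.norm_eq_abs]
    refine mul_le_of_le_one_right (abs_nonneg _) ?_
    rw [abs_of_nonneg (hnn i)]
    exact h1
  have hScont : ∀ i, ContinuousOn (fun t => S t i) (Set.Icc 0 1) := by
    intro i
    have hIcc : IntegrableOn (fun t => Sd t i) (Set.Icc 0 1) volume :=
      by rw [integrableOn_Icc_iff_integrableOn_Ioc]; exact hhInt i
    exact (continuousOn_const.add (intervalIntegral.continuousOn_primitive hIcc)).congr
      fun t ht => hSrep' i t ht
  have hSaesm : ∀ i, AEStronglyMeasurable (fun t => S t i)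
      (volume.restrict (Set.Ioc (0:ℝ) 1)) := fun i =>
    AEStronglyMeasurable.mono_measure (μ := volume.restrict (Set.Icc 0 1))
      ((hScont i).aestronglyMeasurable measurableSet_Icc)
      (Measure.restrict_mono Set.Ioc_subset_Icc_self le_rfl)
  have hf2 : ∀ i, Integrable (fun t => S t i * g i t)
      (volume.restrict (Set.Ioc (0:ℝ) 1)) := by
    intro i
    obtain ⟨C, hC⟩ := IsCompact.exists_bound_of_continuousOn isCompact_Icc (hScont i)
    refine Integrable.mono' (g := fun t => C * |g i t|) ((hgInt i).norm.const_mul C)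
      ((hSaesm i).mul (hgInt i).aestronglyMeasurable) ?_
    filter_upwards [hμae] with t ht
    rw [norm_mul, Real.norm_eq_abs, Real.norm_eq_abs]
    exact mul_le_mul_of_nonneg_right
      (by simpa using hC t ⟨ht.1.le, ht.2⟩) (abs_nonneg _)
  have hDInt : Integrable D (volume.restrict (Set.Ioc (0:ℝ) 1)) := by
    rw [hDdef]
    exact integrable_finset_sum Finset.univ fun i _ => (hf1 i).sub (hf2 i)
  -- the value of ∫ D via integration by parts
  have hDval : (∫ t in Set.Ioc (0:ℝ) 1, D t)
      = (∑ i, S 1 i * ρb i) - ∑ i, S 0 i * ρa i := by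
    simp only [hDdef]
    rw [integral_finset_sum (μ := volume.restrict (Set.Ioc (0:ℝ) 1)) Finset.univ
      (f := fun i => fun t => Sd t i * ρ t i - S t i * g i t)
      (fun i _ => (hf1 i).sub (hf2 i)), ← Finset.sum_sub_distrib]
    refine Finset.sum_congr rfl fun i _ => ?_
    have hEq : Set.EqOn (fun t => Sd t i * ρ t i - S t i * g i t)
        (fun t => Sd t i * (ρa i - ∫ s in Set.Ioc (0:ℝ) t, g i s)
          - (S 0 i + ∫ s in Set.Ioc (0:ℝ) t, Sd s i) * g i t) (Set.Ioc 0 1) := by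
      intro t ht
      simp only
      rw [← hρrep' i t ⟨ht.1.le, ht.2⟩, ← hSrep' i t ⟨ht.1.le, ht.2⟩]
    rw [setIntegral_congr_fun measurableSet_Ioc hEq,
      parts (hgInt i) (hhInt i) (S 0 i) (ρa i)]
    have e1 : S 1 i = S 0 i + ∫ s in Set.Ioc (0:ℝ) 1, Sd s i :=
      hSrep' i 1 ⟨zero_le_one, le_rfl⟩
    have e2 : ρb i = ρa i - ∫ s in Set.Ioc (0:ℝ) 1, g i s := by
      rw [← hρ1]; exact hρrep' i 1 ⟨zero_le_one, le_rfl⟩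
    rw [e1, e2]
  -- the pointwise a.e. inequality
  have hres : volume.restrict (Set.Ioc (0:ℝ) 1) = volume.restrict (Set.Icc (0:ℝ) 1) :=
    Measure.restrict_congr_set Ioc_ae_eq_Icc
  have hhjb' : ∀ᵐ t ∂(volume.restrict (Set.Ioc (0:ℝ) 1)),
      hjbExpr E Sg wd S Sd (ρ t) t ≤ 0 := by rw [hres]; exact hhjb
  have hae : ∀ᵐ t ∂(volume.restrict (Set.Ioc (0:ℝ) 1)), ENNReal.ofReal (D t)
      ≤ (1/4 : ℝ≥0∞) * ∑ i, ∑ j,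
        (if E i j then Lcost (thetaA (ρ t) i j) (m t i j) else 0) := by
    filter_upwards [hhjb', hμae] with t hjbt ht
    obtain ⟨hnn, hsum⟩ := hprob t ⟨ht.1.le, ht.2⟩
    have hθ : ∀ i j, 0 ≤ thetaA (ρ t) i j := fun i j =>
      div_nonneg (add_nonneg (hnn i) (hnn j)) (by norm_num)
    set X : Fin N → Fin N → ℝ := fun i j =>
      m t i j + (Sg j - Sg i) * thetaA (ρ t) i j * wd t with hXdef
    have hXskew : ∀ i j, E i j → X i j = - X j i := by
      intro i j _
      have hm := (hvf t).1 i j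
      have hθsym : thetaA (ρ t) i j = thetaA (ρ t) j i := by
        unfold thetaA; ring
      simp only [hXdef]
      rw [hm, hθsym]; ring
    have hgX : ∀ i, g i t = ∑ j, (if E i j then X i j else 0) := by
      intro i; simp only [hgdef, hXdef]
    have hD1 : D t = (∑ i, Sd t i * ρ t i)
        - ∑ i, S t i * ∑ j, (if E i j then X i j else 0) := by
      simp only [hDdef]
      rw [Finset.sum_sub_distrib]
    set Q : ℝ := ∑ i, ∑ j, (if E i j then (S t i - S t j)^2 * thetaA (ρ t) i j else 0)
      with hQdef
    set M : ℝ := ∑ i, ∑ j, (if E i j then (S t i - S t j) * m t i j else 0) with hMdef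
    set W : ℝ := ∑ i, ∑ j,
      (if E i j then (Sg i - Sg j) * (S t i - S t j) * thetaA (ρ t) i j else 0) with hWdef
    have hXsum : ∑ i, ∑ j, (if E i j then (S t i - S t j) * X i j else 0)
        = M - W * wd t := by
      have per : ∀ i j : Fin N, (if E i j then (S t i - S t j) * X i j else 0)
          = (if E i j then (S t i - S t j) * m t i j else 0)
            - (if E i j then (Sg i - Sg j) * (S t i - S t j) * thetaA (ρ t) i j else 0)
              * wd t := by
        intro i j
        simp only [hXdef]
        split_ifs with hij
        · ring
        · ring
      calc ∑ i, ∑ j, (if E i j then (S t i - S t j) * X i j else 0)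
          = ∑ i, ∑ j, ((if E i j then (S t i - S t j) * m t i j else 0)
            - (if E i j then (Sg i - Sg j) * (S t i - S t j) * thetaA (ρ t) i j else 0)
              * wd t) :=
            Finset.sum_congr rfl fun i _ => Finset.sum_congr rfl fun j _ => per i j
        _ = M - W * wd t := by
            simp only [Finset.sum_sub_distrib, ← Finset.sum_mul, hMdef, hWdef]
    have hjbt' : (∑ i, Sd t i * ρ t i) + (1/4) * Q + (1/2) * W * wd t ≤ 0 := by
      unfold hjbExpr at hjbt
      rw [hQdef, hWdef]
      exact hjbt
    have hDb : D t ≤ ∑ i, ∑ j, (if E i j then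
        -(1/4 * ((S t i - S t j)^2 * thetaA (ρ t) i j))
          - 1/2 * ((S t i - S t j) * m t i j) else 0) := by
      have hrhs : (∑ i, ∑ j, (if E i j then
          -(1/4 * ((S t i - S t j)^2 * thetaA (ρ t) i j))
            - 1/2 * ((S t i - S t j) * m t i j) else 0))
          = -(1/4 * Q) - 1/2 * M := by
        have per2 : ∀ i j : Fin N, (if E i j then
            -(1/4 * ((S t i - S t j)^2 * thetaA (ρ t) i j))
              - 1/2 * ((S t i - S t j) * m t i j) else 0)
            = -(1/4 * (if E i j then (S t i - S t j)^2 * thetaA (ρ t) i j else 0))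
              - 1/2 * (if E i j then (S t i - S t j) * m t i j else 0) := by
          intro i j; split_ifs <;> ring
        calc (∑ i, ∑ j, (if E i j then
            -(1/4 * ((S t i - S t j)^2 * thetaA (ρ t) i j))
              - 1/2 * ((S t i - S t j) * m t i j) else 0))
            = ∑ i, ∑ j,
              (-(1/4 * (if E i j then (S t i - S t j)^2 * thetaA (ρ t) i j else 0))
                - 1/2 * (if E i j then (S t i - S t j) * m t i j else 0)) :=
              Finset.sum_congr rfl fun i _ => Finset.sum_congr rfl fun j _ => per2 i j
          _ = -(1/4 * Q) - 1/2 * M := by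
              simp only [Finset.sum_sub_distrib, Finset.sum_neg_distrib,
                ← Finset.mul_sum, hQdef, hMdef]
      rw [hD1, skew_sum E hEsymm (S t) X hXskew, hXsum, hrhs]
      linarith
    calc ENNReal.ofReal (D t)
        ≤ ENNReal.ofReal (∑ i, ∑ j, (if E i j then
            -(1/4 * ((S t i - S t j)^2 * thetaA (ρ t) i j))
              - 1/2 * ((S t i - S t j) * m t i j) else 0)) :=
          ENNReal.ofReal_le_ofReal hDb
      _ ≤ ∑ i, ENNReal.ofReal (∑ j, (if E i j then
            -(1/4 * ((S t i - S t j)^2 * thetaA (ρ t) i j))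
              - 1/2 * ((S t i - S t j) * m t i j) else 0)) := myOfReal_sum_le _ _
      _ ≤ ∑ i, ∑ j, ENNReal.ofReal (if E i j then
            -(1/4 * ((S t i - S t j)^2 * thetaA (ρ t) i j))
              - 1/2 * ((S t i - S t j) * m t i j) else 0) :=
          Finset.sum_le_sum fun i _ => myOfReal_sum_le _ _
      _ ≤ ∑ i, ∑ j, (1/4 : ℝ≥0∞) *
            (if E i j then Lcost (thetaA (ρ t) i j) (m t i j) else 0) := by
          refine Finset.sum_le_sum fun i _ => Finset.sum_le_sum fun j _ => ?_
          by_cases hij : E i j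
          · rw [if_pos hij, if_pos hij]
            exact pair_bound _ _ _ (hθ i j)
          · rw [if_neg hij, if_neg hij]
            simp
      _ = (1/4 : ℝ≥0∞) * ∑ i, ∑ j,
            (if E i j then Lcost (thetaA (ρ t) i j) (m t i j) else 0) := by
          simp only [← Finset.mul_sum]
  -- putting everything together
  have hmax : ∀ x : ℝ, ENNReal.ofReal (max x 0) = ENNReal.ofReal x := by
    intro x
    rcases le_total x 0 with h | h
    · rw [max_eq_right h, ENNReal.ofReal_zero, eq_comm, ENNReal.ofReal_eq_zero]
      exact h
    · rw [max_eq_left h]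
  calc ENNReal.ofReal ((∑ i, S 1 i * ρb i) - ∑ i, S 0 i * ρa i)
      = ENNReal.ofReal (∫ t in Set.Ioc (0:ℝ) 1, D t) := by rw [hDval]
    _ ≤ ENNReal.ofReal (∫ t in Set.Ioc (0:ℝ) 1, max (D t) 0) :=
        ENNReal.ofReal_le_ofReal
          (integral_mono hDInt hDInt.pos_part fun t => le_max_left _ _)
    _ = ∫⁻ t in Set.Ioc (0:ℝ) 1, ENNReal.ofReal (max (D t) 0) :=
        ofReal_integral_eq_lintegral_ofReal hDInt.pos_part
          (Filter.Eventually.of_forall fun t => le_max_right _ _)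
    _ = ∫⁻ t in Set.Ioc (0:ℝ) 1, ENNReal.ofReal (D t) := lintegral_congr fun t => hmax _
    _ ≤ ∫⁻ t in Set.Ioc (0:ℝ) 1, (1/4 : ℝ≥0∞) * ∑ i, ∑ j,
          (if E i j then Lcost (thetaA (ρ t) i j) (m t i j) else 0) :=
        lintegral_mono_ae hae
    _ = action E ρ m := by
        unfold action
        rw [hres]


end
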